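/- Define J^{l,m}(a,b) for positive real tuples a = (a_1,…,a_l), b = (b_1,…,b_m) by J^{l,m} = ∫_ℝ (∏ a_i ∏ b_j)/(∏(i k + a_i) ∏(b_j - i k)) dk, a function symmetric in each set of variables, satisfying J^{s,0} = J^{0,s} = 0 for s > 1, J^{1,1}(a_1,b_1) = 2π a_1 b_1/(a_1+b_1), and the recursion J^{l,m} = (a_l/(a_l+b_m))J^{l-1,m} + (b_m/(a_l+b_m))J^{l,m-1}. Suppose A, B > 0, all a_i > A, and there exist k indices j_1,…,j_k with b_{j_s} < B for each s. Then (1/(2π)) J^{l,m} ≤ B^k (1 + 1/A)^{l+m}. -/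

import Mathlib

/-- Abstract estimate for `J^{l,m}`: if `J` is symmetric in each set of variables,
vanishes for `J^{s,0}` and `J^{0,s}` with `s > 1`, has base value
`J^{1,1}(a₁,b₁) = 2π a₁b₁/(a₁+b₁)`, and satisfies the recursion
`J^{l,m} = (a_l/(a_l+b_m))J^{l-1,m} + (b_m/(a_l+b_m))J^{l,m-1}`, then whenever
all `a_i > A` and `k` of the `b_j` are `< B`, one has
`(1/(2π)) J^{l,m} ≤ B^k (1+1/A)^{l+m}`. -/
theorem stmt_3
    (J : ∀ l m : ℕ, (Fin l → ℝ) → (Fin m → ℝ) → ℝ)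
    (hsym : ∀ (l m : ℕ) (a : Fin l → ℝ) (b : Fin m → ℝ),
      (∀ i, 0 < a i) → (∀ j, 0 < b j) →
      ∀ (σ : Equiv.Perm (Fin l)) (τ : Equiv.Perm (Fin m)),
        J l m (a ∘ σ) (b ∘ τ) = J l m a b)
    (hzero : ∀ (s : ℕ), 1 < s → ∀ (a : Fin s → ℝ) (b : Fin 0 → ℝ),
      (∀ i, 0 < a i) → J s 0 a b = 0 ∧ J 0 s b a = 0)
    (hbase : ∀ (a b : Fin 1 → ℝ), 0 < a 0 → 0 < b 0 →
      J 1 1 a b = 2 * Real.pi * (a 0 * b 0 / (a 0 + b 0)))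
    (hrec : ∀ (l m : ℕ), 1 ≤ l + m →
      ∀ (a : Fin (l + 1) → ℝ) (b : Fin (m + 1) → ℝ),
      (∀ i, 0 < a i) → (∀ j, 0 < b j) →
      J (l + 1) (m + 1) a b
        = (a (Fin.last l) / (a (Fin.last l) + b (Fin.last m)))
            * J l (m + 1) (a ∘ Fin.castSucc) b
          + (b (Fin.last m) / (a (Fin.last l) + b (Fin.last m)))
            * J (l + 1) m a (b ∘ Fin.castSucc))
    (l m k : ℕ) (hl : 1 ≤ l) (hm : 1 ≤ m) (hk : 1 ≤ k)
    (A B : ℝ) (hA : 0 < A) (hB : 0 < B)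
    (a : Fin l → ℝ) (b : Fin m → ℝ)
    (ha : ∀ i, A < a i) (hb : ∀ j, 0 < b j)
    (S : Finset (Fin m)) (hS : S.card = k) (hSb : ∀ j ∈ S, b j < B) :
    1 / (2 * Real.pi) * J l m a b ≤ B ^ k * (1 + 1 / A) ^ (l + m) := by
  have hpi : (0:ℝ) < 2 * Real.pi := by positivity
  have hC : (1:ℝ) ≤ 1 + 1 / A := by
    have : (0:ℝ) ≤ 1 / A := by positivity
    linarith
  -- Lemma A : J^{L+1,1} ≤ 2π b 0
  have lemA : ∀ (L : ℕ) (a : Fin (L+1) → ℝ) (b : Fin 1 → ℝ),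
      (∀ i, 0 < a i) → (∀ j, 0 < b j) → J (L+1) 1 a b ≤ 2 * Real.pi * b 0 := by
    intro L
    induction L with
    | zero =>
      intro a b ha hb
      rw [hbase a b (ha 0) (hb 0)]
      have h1 : a 0 * b 0 / (a 0 + b 0) ≤ b 0 := by
        rw [div_le_iff₀ (by have := ha 0; have := hb 0; linarith)]
        nlinarith [ha 0, hb 0, sq_nonneg (b 0)]
      nlinarith [Real.pi_pos]
    | succ s ihs =>
      intro a b ha hb
      have hr := hrec (s+1) 0 (by omega) a b ha hb
      have hz : J (s+1+1) 0 a (b ∘ Fin.castSucc) = 0 :=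
        (hzero (s+1+1) (by omega) a (b ∘ Fin.castSucc) ha).1
      rw [hr, hz, mul_zero, add_zero]
      have hb0 : b (Fin.last 0) = b 0 := congrArg b (Subsingleton.elim _ _)
      have hw1nn : 0 ≤ a (Fin.last (s+1)) / (a (Fin.last (s+1)) + b (Fin.last 0)) := by
        have := ha (Fin.last (s+1)); have := hb (Fin.last 0); positivity
      have hw1le : a (Fin.last (s+1)) / (a (Fin.last (s+1)) + b (Fin.last 0)) ≤ 1 := by
        rw [div_le_one (by have := ha (Fin.last (s+1)); have := hb (Fin.last 0); positivity)]
        have := hb (Fin.last 0); linarith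
      have hih : J (s+1) (0+1) (a ∘ Fin.castSucc) b ≤ 2 * Real.pi * b 0 :=
        ihs (a ∘ Fin.castSucc) b (fun i => ha _) hb
      calc a (Fin.last (s+1)) / (a (Fin.last (s+1)) + b (Fin.last 0))
            * J (s+1) (0+1) (a ∘ Fin.castSucc) b
          ≤ a (Fin.last (s+1)) / (a (Fin.last (s+1)) + b (Fin.last 0)) * (2 * Real.pi * b 0) :=
            mul_le_mul_of_nonneg_left hih hw1nn
        _ ≤ 1 * (2 * Real.pi * b 0) := by
            apply mul_le_mul_of_nonneg_right hw1le
            have := hb 0; positivity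
        _ = 2 * Real.pi * b 0 := one_mul _
  -- Main lemma
  have main : ∀ (n L M : ℕ) (a : Fin L → ℝ) (b : Fin M → ℝ), L + M = n → 1 ≤ L → 1 ≤ M →
      (∀ i, A < a i) → (∀ j, 0 < b j) → ∀ (K : ℕ) (S : Finset (Fin M)), 1 ≤ K →
      S.card = K → (∀ j ∈ S, b j < B) →
      J L M a b ≤ 2 * Real.pi * (B ^ K * (1 + 1 / A) ^ (L + M)) := by
    intro n
    induction n using Nat.strong_induction_on with
    | _ n ih =>
    intro L M a b hn hL hM ha hb K S hK hScard hSb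
    obtain ⟨L', rfl⟩ : ∃ L', L = L' + 1 := ⟨L - 1, by omega⟩
    rcases Nat.lt_or_ge M 2 with hM2 | hM2
    · -- M = 1, hence K = 1
      obtain rfl : M = 1 := by omega
      obtain rfl : K = 1 := by
        have h := Finset.card_le_univ S
        rw [hScard] at h
        simp at h
        omega
      have h0 : (0 : Fin 1) ∈ S := by
        obtain ⟨j, hj⟩ := Finset.card_pos.mp (by omega : 0 < S.card)
        exact (Subsingleton.elim j 0) ▸ hj
      have hb0 : b 0 < B := hSb 0 h0
      have hXb := lemA L' a b (fun i => hA.trans (ha i)) hb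
      have h1 : (1:ℝ) ≤ (1 + 1/A) ^ (L' + 1 + 1) := one_le_pow₀ hC
      calc J (L'+1) 1 a b ≤ 2 * Real.pi * b 0 := hXb
        _ ≤ 2 * Real.pi * (B ^ 1 * (1 + 1/A) ^ (L' + 1 + 1)) := by
            apply mul_le_mul_of_nonneg_left _ hpi.le
            rw [pow_one]
            nlinarith
    · -- M ≥ 2
      obtain ⟨M', rfl⟩ : ∃ M', M = M' + 1 := ⟨M - 1, by omega⟩
      have hM' : 1 ≤ M' := by omega
      have hapos : ∀ i, 0 < a i := fun i => hA.trans (ha i)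
      have hBd0 : (0:ℝ) ≤ 2 * Real.pi * (B ^ K * (1 + 1/A) ^ (L' + M' + 1)) := by positivity
      -- bound for the X branch (all b's kept)
      have hXbound : ∀ (b' : Fin (M'+1) → ℝ), (∀ j, 0 < b' j) →
          ∀ (K' : ℕ), 1 ≤ K' → ∀ (S' : Finset (Fin (M'+1))), S'.card = K' →
          (∀ j ∈ S', b' j < B) →
          J L' (M'+1) (a ∘ Fin.castSucc) b'
            ≤ 2 * Real.pi * (B ^ K' * (1 + 1/A) ^ (L' + M' + 1)) := by
        intro b' hb' K' hK' S' hc hs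
        rcases Nat.eq_zero_or_pos L' with h0 | h1
        · subst h0
          have hz : J 0 (M'+1) (a ∘ Fin.castSucc) b' = 0 :=
            (hzero (M'+1) (by omega) b' (a ∘ Fin.castSucc) hb').2
          rw [hz]; positivity
        · have h := ih (L' + (M'+1)) (by omega) L' (M'+1) (a ∘ Fin.castSucc) b' rfl h1
            (by omega) (fun i => ha _) hb' K' S' hK' hc hs
          have e : L' + (M'+1) = L' + M' + 1 := by omega
          rw [e] at h
          exact h
      by_cases hSu : S = Finset.univ
      · -- all b's small : K = M'+1
        subst hSu
        obtain rfl : K = M' + 1 := by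
          rw [← hScard, Finset.card_univ, Fintype.card_fin]
        have hblast : b (Fin.last M') < B := hSb _ (Finset.mem_univ _)
        have hr := hrec L' M' (by omega) a b hapos hb
        have hX := hXbound b hb (M'+1) (by omega) Finset.univ
          (by rw [Finset.card_univ, Fintype.card_fin]) (fun j hj => hSb j (Finset.mem_univ _))
        have hY : J (L'+1) M' a (b ∘ Fin.castSucc)
            ≤ 2 * Real.pi * (B ^ M' * (1 + 1/A) ^ (L' + M' + 1)) := by
          have h := ih (L'+1+M') (by omega) (L'+1) M' a (b ∘ Fin.castSucc) rfl (by omega) hM'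
            ha (fun j => hb _) M' Finset.univ hM'
            (by rw [Finset.card_univ, Fintype.card_fin]) (fun j hj => hSb _ (Finset.mem_univ _))
          have e : L' + 1 + M' = L' + M' + 1 := by omega
          rw [e] at h
          exact h
        set aL := a (Fin.last L') with haLdef
        set bM := b (Fin.last M') with hbMdef
        have haL : A < aL := ha _
        have hbM : 0 < bM := hb _
        have hden : 0 < aL + bM := by linarith
        have hw1nn : 0 ≤ aL / (aL + bM) := div_nonneg (by linarith) hden.le
        have hw1le : aL / (aL + bM) ≤ 1 := by rw [div_le_one hden]; linarith
        have hw2nn : 0 ≤ bM / (aL + bM) := div_nonneg hbM.le hden.le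
        have hw2le : bM / (aL + bM) ≤ B / A := by
          apply div_le_div₀ hB.le hblast.le hA
          linarith
        have hY0 : (0:ℝ) ≤ 2 * Real.pi * (B ^ M' * (1 + 1/A) ^ (L' + M' + 1)) := by positivity
        have e : L' + 1 + (M' + 1) = L' + M' + 2 := by omega
        rw [e]
        calc J (L'+1) (M'+1) a b
            = aL / (aL + bM) * J L' (M'+1) (a ∘ Fin.castSucc) b
              + bM / (aL + bM) * J (L'+1) M' a (b ∘ Fin.castSucc) := hr
          _ ≤ 1 * (2 * Real.pi * (B ^ (M'+1) * (1 + 1/A) ^ (L' + M' + 1)))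
              + (B / A) * (2 * Real.pi * (B ^ M' * (1 + 1/A) ^ (L' + M' + 1))) := by
              apply add_le_add
              · exact (mul_le_mul_of_nonneg_left hX hw1nn).trans
                  (mul_le_mul_of_nonneg_right hw1le hBd0)
              · exact (mul_le_mul_of_nonneg_left hY hw2nn).trans
                  (mul_le_mul_of_nonneg_right hw2le hY0)
          _ = 2 * Real.pi * (B ^ (M'+1) * (1 + 1/A) ^ (L' + M' + 2)) := by
              rw [pow_succ B M', pow_succ (1+1/A) (L'+M'+1)]
              field_simp
      · -- there is a non-small b ; swap it to the last position
        obtain ⟨j0, hj0⟩ : ∃ j0, j0 ∉ S := by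
          by_contra h
          push_neg at h
          exact hSu (Finset.eq_univ_iff_forall.mpr h)
        set τ : Equiv.Perm (Fin (M'+1)) := Equiv.swap j0 (Fin.last M') with hτ
        set b' : Fin (M'+1) → ℝ := b ∘ τ with hb'def
        have hb' : ∀ j, 0 < b' j := fun j => hb _
        have hJeq : J (L'+1) (M'+1) a b' = J (L'+1) (M'+1) a b := by
          have h := hsym (L'+1) (M'+1) a b hapos hb 1 τ
          simpa using h
        set S' := S.image τ with hS'def
        have hS'card : S'.card = K := by
          rw [hS'def, Finset.card_image_of_injective _ τ.injective, hScard]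
        have hS'b : ∀ j ∈ S', b' j < B := by
          intro j hj
          obtain ⟨s, hs, rfl⟩ := Finset.mem_image.mp hj
          have hss : b' (τ s) = b s := by
            rw [hb'def]
            simp only [Function.comp_apply, hτ, Equiv.swap_apply_self]
          rw [hss]; exact hSb s hs
        have hlast : Fin.last M' ∉ S' := by
          intro h
          obtain ⟨s, hs, hse⟩ := Finset.mem_image.mp h
          have : s = j0 := by
            have h2 := congrArg τ hse
            rw [Equiv.swap_apply_self] at h2
            rw [h2, hτ, Equiv.swap_apply_right]
          exact hj0 (this ▸ hs)
        have hr := hrec L' M' (by omega) a b' hapos hb'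
        -- the set S'' in Fin M'
        set S'' := Finset.univ.filter (fun j : Fin M' => j.castSucc ∈ S') with hS''def
        have hS''card : S''.card = K := by
          rw [← hS'card]
          apply Finset.card_bij (fun (j : Fin M') _ => j.castSucc)
          · intro x hx; exact (Finset.mem_filter.mp hx).2
          · intro a₁ h₁ a₂ h₂ h; exact Fin.castSucc_injective _ h
          · intro x hx
            have hxne : x ≠ Fin.last M' := fun h => hlast (h ▸ hx)
            have hxlt : x.val < M' := by
              have := x.isLt
              have : x.val ≠ M' := fun h => hxne (Fin.ext (by simp [h, Fin.val_last]))
              omega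
            refine ⟨⟨x.val, hxlt⟩, ?_, ?_⟩
            · have hcs : Fin.castSucc (⟨x.val, hxlt⟩ : Fin M') = x := Fin.ext (by simp)
              rw [hS''def, Finset.mem_filter]
              refine ⟨Finset.mem_univ _, ?_⟩
              rw [hcs]; exact hx
            · exact Fin.ext (by simp)
        have hYsmall : ∀ j ∈ S'', (b' ∘ Fin.castSucc) j < B := by
          intro j hj
          exact hS'b _ ((Finset.mem_filter.mp hj).2)
        have hY : J (L'+1) M' a (b' ∘ Fin.castSucc)
            ≤ 2 * Real.pi * (B ^ K * (1 + 1/A) ^ (L' + M' + 1)) := by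
          have h := ih (L'+1+M') (by omega) (L'+1) M' a (b' ∘ Fin.castSucc) rfl (by omega) hM'
            ha (fun j => hb' _) K S'' hK hS''card hYsmall
          have e : L' + 1 + M' = L' + M' + 1 := by omega
          rw [e] at h
          exact h
        have hX := hXbound b' hb' K hK S' hS'card hS'b
        set aL := a (Fin.last L') with haLdef
        set bM := b' (Fin.last M') with hbMdef
        have haL : A < aL := ha _
        have hbM : 0 < bM := hb' _
        have hden : 0 < aL + bM := by linarith
        have hw1nn : 0 ≤ aL / (aL + bM) := div_nonneg (by linarith) hden.le
        have hw1le : aL / (aL + bM) ≤ 1 := by rw [div_le_one hden]; linarith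
        have hw2nn : 0 ≤ bM / (aL + bM) := div_nonneg hbM.le hden.le
        have hw2le : bM / (aL + bM) ≤ 1 := by rw [div_le_one hden]; linarith [hA.trans haL]
        have hwsum : aL / (aL + bM) + bM / (aL + bM) = 1 := by
          rw [← add_div, div_self hden.ne']
        have e : L' + 1 + (M' + 1) = L' + M' + 2 := by omega
        rw [e]
        calc J (L'+1) (M'+1) a b
            = J (L'+1) (M'+1) a b' := hJeq.symm
          _ = aL / (aL + bM) * J L' (M'+1) (a ∘ Fin.castSucc) b'
              + bM / (aL + bM) * J (L'+1) M' a (b' ∘ Fin.castSucc) := hr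
          _ ≤ aL / (aL + bM) * (2 * Real.pi * (B ^ K * (1 + 1/A) ^ (L' + M' + 1)))
              + bM / (aL + bM) * (2 * Real.pi * (B ^ K * (1 + 1/A) ^ (L' + M' + 1))) :=
              add_le_add (mul_le_mul_of_nonneg_left hX hw1nn)
                (mul_le_mul_of_nonneg_left hY hw2nn)
          _ = 2 * Real.pi * (B ^ K * (1 + 1/A) ^ (L' + M' + 1)) := by
              rw [← add_mul, hwsum, one_mul]
          _ ≤ 2 * Real.pi * (B ^ K * (1 + 1/A) ^ (L' + M' + 2)) := by
              apply mul_le_mul_of_nonneg_left _ hpi.le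
              apply mul_le_mul_of_nonneg_left _ (pow_nonneg hB.le K)
              exact pow_le_pow_right₀ hC (by omega)
  have h := main (l + m) l m a b rfl hl hm ha hb k S hk hS hSb
  calc 1 / (2 * Real.pi) * J l m a b
      ≤ 1 / (2 * Real.pi) * (2 * Real.pi * (B ^ k * (1 + 1/A) ^ (l + m))) := by
        apply mul_le_mul_of_nonneg_left h (by positivity)
    _ = B ^ k * (1 + 1/A) ^ (l + m) := by
        field_simp
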